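/- Let N be an admissible algebra (a finite-dimensional commutative nilpotent algebra over F, char 0, with 1-dimensional annihilator). Then the set Π(N) of admissible projections (projections π ∈ End(N) with range Ann(N)) is an affine subspace of End(N) of dimension dim(N/Ann(N)), and the map (x + Ann(N), π) ↦ π ∘ M_{exp x} defines a simply transitive action of the vector group N/Ann(N) on Π(N), where M_e(y) = e·y denotes multiplication by e = exp(x) in the unital extension N⁰. -/

import Mathlib

set_option linter.unusedSectionVars false
set_option maxHeartbeats 1000000

/-- `pw F N k` is the characteristic ideal `N^k`. -/
def pw (F N : Type*) [Field F] [NonUnitalNonAssocRing N] [Module F N] : ℕ → Submodule F N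
  | 0 => ⊤
  | 1 => ⊤
  | (k+2) => Submodule.span F {z : N | ∃ x : N, ∃ y ∈ pw F N (k+1), z = x * y}

/-- The annihilator `Ann(N) = {x | x·N = 0}` of a commutative algebra `N`. -/
def annSub (F N : Type*) [Field F] [NonUnitalCommRing N] [Module F N]
    [SMulCommClass F N N] [IsScalarTower F N N] : Submodule F N where
  carrier := {x | ∀ y : N, x * y = 0}
  add_mem' := by intro a b ha hb y; simp [add_mul, ha y, hb y]
  zero_mem' := by intro y; simp
  smul_mem' := by intro c x hx y; rw [smul_mul_assoc, hx y, smul_zero]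

/-- `npw x k = x^(k+1)` in a non-unital ring. -/
def npw {N : Type*} [Mul N] (x : N) : ℕ → N
  | 0 => x
  | (k+1) => x * npw x k

/-- The truncated exponential `exp₁ x = Σ_{k=1}^{m} x^k/k!`. -/
noncomputable def exp1 (F : Type*) {N : Type*} [Field F] [NonUnitalNonAssocRing N]
    [Module F N] (m : ℕ) (x : N) : N :=
  ∑ k ∈ Finset.range m, ((Nat.factorial (k + 1) : F))⁻¹ • npw x k

/-- An admissible projection: a projection of `N` onto the annihilator `Ann(N)`. -/
def IsAdmProj (F N : Type*) [Field F] [NonUnitalCommRing N] [Module F N]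
    [SMulCommClass F N N] [IsScalarTower F N N] (π : N →ₗ[F] N) : Prop :=
  π ∘ₗ π = π ∧ LinearMap.range π = annSub F N

/-- `actProj F ν x π = π ∘ M_{exp x}`, the action of `x ∈ N` on projections; indeed
`M_{exp x}(y) = (1 + exp₁ x)·y = y + (exp₁ x)·y` in the unital extension `N⁰`. -/
noncomputable def actProj (F : Type*) {N : Type*} [Field F] [NonUnitalCommRing N]
    [Module F N] [SMulCommClass F N N] [IsScalarTower F N N]
    (ν : ℕ) (x : N) (π : N →ₗ[F] N) : N →ₗ[F] N :=
  π + π ∘ₗ LinearMap.mul F N (exp1 F ν x)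

section Aux

variable {F N : Type*} [Field F] [NonUnitalCommRing N] [Module F N]
  [SMulCommClass F N N] [IsScalarTower F N N]

lemma mul_mem_pw (k : ℕ) {u : N} (hu : u ∈ pw F N k) (z : N) : z * u ∈ pw F N (k+1) := by
  cases k with
  | zero => simp [pw]
  | succ k =>
      rw [(by rfl : pw F N (k+1+1) =
        Submodule.span F {z : N | ∃ x : N, ∃ y ∈ pw F N (k+1), z = x * y})]
      exact Submodule.subset_span ⟨z, u, hu, rfl⟩

lemma pw_succ_le (k : ℕ) : pw F N (k+1) ≤ pw F N k := by
  induction k with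
  | zero => exact le_top
  | succ k ih =>
    cases k with
    | zero => exact le_top
    | succ k =>
      show pw F N (k+3) ≤ pw F N (k+2)
      rw [pw, pw]
      apply Submodule.span_mono
      rintro z ⟨x, y, hy, rfl⟩
      exact ⟨x, y, ih hy, rfl⟩

lemma pw_antitone : ∀ {j k : ℕ}, j ≤ k → pw F N k ≤ pw F N j := by
  intro j k h
  induction h with
  | refl => exact le_rfl
  | step _ ih => exact le_trans (pw_succ_le _) ih

lemma mem_annSub {x : N} : x ∈ annSub F N ↔ ∀ y : N, x * y = 0 := Iff.rfl

lemma adm_fix {π : N →ₗ[F] N} (hπ : IsAdmProj F N π) {a : N} (ha : a ∈ annSub F N) :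
    π a = a := by
  obtain ⟨hp, hr⟩ := hπ
  rw [← hr] at ha
  obtain ⟨b, rfl⟩ := ha
  have := congrFun (congrArg (fun f => f.toFun) hp) b
  simpa using this

lemma adm_mem {π : N →ₗ[F] N} (hπ : IsAdmProj F N π) (z : N) : π z ∈ annSub F N := by
  rw [← hπ.2]; exact ⟨z, rfl⟩

lemma isAdmProj_of {π : N →ₗ[F] N} (h1 : ∀ z, π z ∈ annSub F N)
    (h2 : ∀ a ∈ annSub F N, π a = a) : IsAdmProj F N π := by
  constructor
  · ext z; exact h2 _ (h1 z)
  · apply le_antisymm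
    · rintro _ ⟨z, rfl⟩; exact h1 z
    · intro a ha; exact ⟨a, h2 a ha⟩

/-- Key lemma: if `π(v·z) = 0` for all `z` then `v ∈ Ann`. -/
lemma memAnn_of_proj_mul {π : N →ₗ[F] N} (hπ : IsAdmProj F N π)
    {ν : ℕ} (hnil : pw F N (ν + 1) = ⊥)
    {v : N} (h : ∀ z, π (v * z) = 0) : v ∈ annSub F N := by
  have key : ∀ m : ℕ, ∀ u ∈ pw F N (ν + 1 - m), v * u = 0 := by
    intro m
    induction m with
    | zero =>
        intro u hu
        rw [Nat.sub_zero, hnil] at hu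
        rw [Submodule.mem_bot] at hu; simp [hu]
    | succ m ih =>
      intro u hu
      have hann : v * u ∈ annSub F N := by
        intro z
        rw [mul_assoc]
        apply ih
        have h2 : z * u ∈ pw F N (ν + 1 - (m+1) + 1) := mul_mem_pw _ hu z
        rw [mul_comm u z]
        exact pw_antitone (by omega) h2
      have := adm_fix hπ hann
      rw [h u] at this
      exact this.symm
  intro y
  exact key (ν + 1) y (by rw [Nat.sub_self]; trivial)

lemma npw_zero' (k : ℕ) : npw (0:N) k = 0 := by
  induction k with
  | zero => rfl
  | succ k ih => show (0:N) * npw 0 k = 0; rw [zero_mul]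

lemma exp1_zero (m : ℕ) : exp1 F (N := N) m 0 = 0 := by
  rw [exp1]
  apply Finset.sum_eq_zero
  intro k _
  rw [npw_zero', smul_zero]

lemma actProj_apply (ν : ℕ) (x : N) (π : N →ₗ[F] N) (z : N) :
    actProj F ν x π z = π z + π (exp1 F ν x * z) := by
  simp [actProj, LinearMap.mul_apply']

lemma exp1_sub_eq_sum (n : ℕ) (x y : N) :
    exp1 F n x - exp1 F n y
      = ∑ j ∈ Finset.range n, ((Nat.factorial (j+1) : F))⁻¹ • (npw x j - npw y j) := by
  rw [exp1, exp1, ← Finset.sum_sub_distrib]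
  simp_rw [smul_sub]

/-- For `j ≥ 1`, `x^{j+1} - y^{j+1}` is divisible by `x - y`. -/
lemma npw_sub_factor (x y : N) : ∀ j : ℕ, ∃ w : N, npw x (j+1) - npw y (j+1) = (x - y) * w := by
  intro j
  induction j with
  | zero =>
      refine ⟨x + y, ?_⟩
      show x * x - y * y = _
      rw [sub_mul, mul_add, mul_add, mul_comm y x]; abel
  | succ j ih =>
      obtain ⟨w, hw⟩ := ih
      refine ⟨x * w + npw y (j+1), ?_⟩
      show x * npw x (j+1) - y * npw y (j+1) = _
      have hA : npw x (j+1) = npw y (j+1) + (x-y)*w := by rw [← hw]; abel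
      rw [hA]
      simp only [mul_add, sub_mul, mul_sub]
      rw [mul_left_comm y x w]
      abel

lemma exp1_sub_factor (m : ℕ) (x y : N) :
    ∃ W : N, exp1 F (m+1) x - exp1 F (m+1) y = (x - y) + (x - y) * W := by
  have key : ∀ n : ℕ, ∃ W : N,
      ∑ j ∈ Finset.range n, ((Nat.factorial (j+1+1) : F))⁻¹ • (npw x (j+1) - npw y (j+1))
        = (x - y) * W := by
    intro n
    induction n with
    | zero => exact ⟨0, by simp⟩
    | succ n ih =>
        obtain ⟨W, hW⟩ := ih
        obtain ⟨w, hw⟩ := npw_sub_factor x y n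
        refine ⟨W + ((Nat.factorial (n+1+1) : F))⁻¹ • w, ?_⟩
        rw [Finset.sum_range_succ, hW, hw, mul_add, mul_smul_comm]
  obtain ⟨W, hW⟩ := key m
  refine ⟨W, ?_⟩
  rw [exp1_sub_eq_sum, Finset.sum_range_succ', hW]
  have f0 : ((Nat.factorial (0+1) : F))⁻¹ • (npw x 0 - npw y 0) = x - y := by
    show ((Nat.factorial 1 : F))⁻¹ • (x - y) = x - y
    norm_num [Nat.factorial]
  rw [f0]
  abel

/-- Perturbation: if `w ∈ N^k` then `(x+w)^{j+1} - x^{j+1} ∈ N^{k+1}` for `j ≥ 1`. -/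
lemma npw_shift {k : ℕ} (x : N) {w : N} (hw : w ∈ pw F N k) :
    ∀ j : ℕ, npw (x+w) (j+1) - npw x (j+1) ∈ pw F N (k+1) := by
  intro j
  induction j with
  | zero =>
      have e : npw (x+w) 1 - npw x 1 = x*w + w*x + w*w := by
        show (x+w) * (x+w) - x * x = _
        rw [add_mul, mul_add, mul_add]; abel
      rw [e]
      have h1 : x*w ∈ pw F N (k+1) := mul_mem_pw k hw x
      have h2 : w*x ∈ pw F N (k+1) := by rw [mul_comm]; exact h1
      have h3 : w*w ∈ pw F N (k+1) := mul_mem_pw k hw w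
      exact add_mem (add_mem h1 h2) h3
  | succ j ih =>
      have e : npw (x+w) (j+2) - npw x (j+2)
          = x * (npw (x+w) (j+1) - npw x (j+1)) + w * npw (x+w) (j+1) := by
        show (x+w) * npw (x+w) (j+1) - x * npw x (j+1) = _
        rw [add_mul, mul_sub]; abel
      rw [e]
      have h1 : x * (npw (x+w) (j+1) - npw x (j+1)) ∈ pw F N (k+1) :=
        pw_succ_le (k+1) (mul_mem_pw (k+1) ih x)
      have h2 : w * npw (x+w) (j+1) ∈ pw F N (k+1) := by
        rw [mul_comm]; exact mul_mem_pw k hw _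
      exact add_mem h1 h2

lemma exp1_shift {k : ℕ} (m : ℕ) (x : N) {w : N} (hw : w ∈ pw F N k) :
    exp1 F (m+1) (x+w) - exp1 F (m+1) x - w ∈ pw F N (k+1) := by
  have f0 : ((Nat.factorial (0+1) : F))⁻¹ • (npw (x+w) 0 - npw x 0) = w := by
    show ((Nat.factorial 1 : F))⁻¹ • ((x+w) - x) = w
    norm_num [Nat.factorial]
  have e : exp1 F (m+1) (x+w) - exp1 F (m+1) x - w
      = ∑ j ∈ Finset.range m,
          ((Nat.factorial (j+1+1) : F))⁻¹ • (npw (x+w) (j+1) - npw x (j+1)) := by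
    rw [exp1_sub_eq_sum, Finset.sum_range_succ', f0]
    abel
  rw [e]
  exact Submodule.sum_mem _ fun j _ => Submodule.smul_mem _ _ (npw_shift x hw j)

/-- Surjectivity lemma: every map `δ : N → Ann` killing `Ann` is of the form `π(w·–)`. -/
lemma exists_solve {π : N →ₗ[F] N} [FiniteDimensional F N]
    (hAnn : Module.finrank F (annSub F N) = 1)
    (hπ : IsAdmProj F N π) {ν : ℕ} (hnil : pw F N (ν + 1) = ⊥)
    (δ : N →ₗ[F] N) (hr : ∀ z, δ z ∈ annSub F N) (hk : ∀ a ∈ annSub F N, δ a = 0) :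
    ∃ w : N, ∀ z, π (w * z) = δ z := by
  classical
  set S := annSub F N with hS
  let b : Module.Basis (Fin 1) F S := Module.finBasisOfFinrankEq F S hAnn
  set a₀ : N := (b 0 : N) with ha₀def
  have ha₀ : a₀ ≠ 0 := by
    intro h
    exact b.ne_zero 0 (Subtype.ext h)
  have repr1 : ∀ v : S, (v : N) = (b.repr v 0) • a₀ := by
    intro v
    have h := b.sum_repr v
    rw [Fin.sum_univ_one] at h
    conv_lhs => rw [← h]
    simp [ha₀def]
  let π' : N →ₗ[F] S := LinearMap.codRestrict S π (adm_mem hπ)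
  let lam : N →ₗ[F] F := (b.coord 0) ∘ₗ π'
  have hπeq : ∀ z, π z = lam z • a₀ := by
    intro z
    have := repr1 (π' z)
    simpa [lam, π', Module.Basis.coord_apply] using this
  let δ' : N →ₗ[F] S := LinearMap.codRestrict S δ hr
  let mu : N →ₗ[F] F := (b.coord 0) ∘ₗ δ'
  have hδeq : ∀ z, δ z = mu z • a₀ := by
    intro z
    have := repr1 (δ' z)
    simpa [mu, δ', Module.Basis.coord_apply] using this
  let B : N →ₗ[F] (N →ₗ[F] F) := (LinearMap.mul F N).compr₂ lam
  have hBapp : ∀ v z : N, B v z = lam (v * z) := by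
    intro v z
    simp [B, LinearMap.compr₂_apply, LinearMap.mul_apply']
  have hker : LinearMap.ker B = S := by
    ext v
    simp only [LinearMap.mem_ker]
    constructor
    · intro h
      apply memAnn_of_proj_mul hπ hnil
      intro z
      have h0 : lam (v * z) = 0 := by
        rw [← hBapp, h]; rfl
      rw [hπeq, h0, zero_smul]
    · intro hv
      ext z
      rw [hBapp, hv z, map_zero]; rfl
  have hle : LinearMap.range B ≤ S.dualAnnihilator := by
    rintro _ ⟨v, rfl⟩
    rw [Submodule.mem_dualAnnihilator]
    intro a ha
    rw [hBapp, mul_comm, ha v, map_zero]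
  have hq := Submodule.finrank_quotient_add_finrank S
  have he : Module.finrank F (N ⧸ S) = Module.finrank F S.dualAnnihilator :=
    (Subspace.quotEquivAnnihilator S).finrank_eq
  have hrn := LinearMap.finrank_range_add_finrank_ker B
  rw [hker, hAnn] at hrn
  have hdim : Module.finrank F (LinearMap.range B)
      = Module.finrank F S.dualAnnihilator := by
    rw [hAnn] at hq
    omega
  have hrange : LinearMap.range B = S.dualAnnihilator :=
    Submodule.eq_of_le_of_finrank_eq hle hdim
  have hmu : mu ∈ S.dualAnnihilator := by
    rw [Submodule.mem_dualAnnihilator]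
    intro a ha
    have h0 : δ a = 0 := hk a ha
    rw [hδeq] at h0
    rcases smul_eq_zero.mp h0 with h | h
    · exact h
    · exact absurd h ha₀
  rw [← hrange] at hmu
  obtain ⟨w, hw⟩ := hmu
  refine ⟨w, fun z => ?_⟩
  rw [hπeq, hδeq]
  congr 1
  rw [← hBapp, hw]

end Aux

/-- For an admissible algebra `N` (finite-dimensional commutative nilpotent,
`dim Ann(N) = 1`), the set `Π(N)` of admissible projections is an affine subspace of
`End(N)` (closed under affine combinations), and `(x + Ann(N), π) ↦ π ∘ M_{exp x}` is a
well-defined simply transitive action of the vector group `N/Ann(N)` on `Π(N)` — so `Π(N)`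
has dimension `dim(N/Ann(N))`. -/
theorem stmt8 {F N : Type*} [Field F] [CharZero F] [NonUnitalCommRing N] [Module F N]
    [SMulCommClass F N N] [IsScalarTower F N N] [FiniteDimensional F N]
    (hAnn : Module.finrank F (annSub F N) = 1)
    (ν : ℕ) (hnil : pw F N (ν + 1) = ⊥) :
    (∀ π ρ : N →ₗ[F] N, IsAdmProj F N π → IsAdmProj F N ρ → ∀ t : F,
        IsAdmProj F N (t • π + (1 - t) • ρ)) ∧
    (∀ π : N →ₗ[F] N, IsAdmProj F N π → ∀ x : N, IsAdmProj F N (actProj F ν x π)) ∧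
    (∀ π : N →ₗ[F] N, IsAdmProj F N π → ∀ x y : N, x - y ∈ annSub F N →
        actProj F ν x π = actProj F ν y π) ∧
    (∀ π : N →ₗ[F] N, IsAdmProj F N π → ∀ x y : N,
        actProj F ν x π = actProj F ν y π → x - y ∈ annSub F N) ∧
    (∀ π ρ : N →ₗ[F] N, IsAdmProj F N π → IsAdmProj F N ρ →
        ∃ x : N, actProj F ν x π = ρ) := by
  -- first: `ν ≥ 1`, else `N = 0` contradicting `dim Ann(N) = 1`
  obtain ⟨m, rfl⟩ : ∃ m, ν = m + 1 := by
    cases ν with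
    | succ m => exact ⟨m, rfl⟩
    | zero =>
        exfalso
        have hz : ∀ z : N, z = 0 := by
          intro z
          have hz : z ∈ pw F N 1 := trivial
          rw [hnil] at hz
          exact (Submodule.mem_bot F).mp hz
        have : Subsingleton N := ⟨fun a b => by rw [hz a, hz b]⟩
        have : Subsingleton (annSub F N) := ⟨fun a b => Subtype.ext (Subsingleton.elim _ _)⟩
        rw [Module.finrank_zero_of_subsingleton] at hAnn
        exact one_ne_zero hAnn.symm
  refine ⟨?_, ?_, ?_, ?_, ?_⟩
  · -- affine combinations
    intro π ρ hπ hρ t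
    apply isAdmProj_of
    · intro z
      simp only [LinearMap.add_apply, LinearMap.smul_apply]
      exact add_mem (Submodule.smul_mem _ _ (adm_mem hπ z))
        (Submodule.smul_mem _ _ (adm_mem hρ z))
    · intro a ha
      simp only [LinearMap.add_apply, LinearMap.smul_apply]
      rw [adm_fix hπ ha, adm_fix hρ ha, ← add_smul]
      simp
  · -- action well-defined into Π(N)
    intro π hπ x
    apply isAdmProj_of
    · intro z
      rw [actProj_apply]
      exact add_mem (adm_mem hπ z) (adm_mem hπ _)
    · intro a ha
      rw [actProj_apply, mul_comm, ha _, map_zero, add_zero]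
      exact adm_fix hπ ha
  · -- well-defined on N/Ann
    intro π hπ x y hxy
    have key : ∀ z : N, x * z = y * z := by
      intro z
      have := hxy z
      rw [sub_mul] at this
      exact sub_eq_zero.mp this
    have hnpw : ∀ j : ℕ, npw x (j+1) = npw y (j+1) := by
      intro j
      induction j with
      | zero =>
          show x * x = y * y
          rw [key x, mul_comm y x, key y]
      | succ j ih =>
          show x * npw x (j+1) = y * npw y (j+1)
          rw [ih, key _]
    have hmul : ∀ z : N, exp1 F (m+1) x * z = exp1 F (m+1) y * z := by
      intro z
      rw [exp1, exp1, Finset.sum_mul, Finset.sum_mul]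
      apply Finset.sum_congr rfl
      intro j _
      rw [smul_mul_assoc, smul_mul_assoc]
      congr 1
      cases j with
      | zero => exact key z
      | succ j => rw [hnpw j]
    ext z
    simp only [actProj, LinearMap.add_apply, LinearMap.coe_comp, Function.comp_apply,
      LinearMap.mul_apply']
    rw [hmul z]
  · -- injectivity mod Ann
    intro π hπ x y h
    have hz : ∀ z, π ((exp1 F (m+1) x - exp1 F (m+1) y) * z) = 0 := by
      intro z
      have := congrArg (fun f : N →ₗ[F] N => f z) h
      simp only [actProj, LinearMap.add_apply, LinearMap.coe_comp, Function.comp_apply,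
        LinearMap.mul_apply'] at this
      rw [sub_mul, map_sub, sub_eq_zero]
      exact add_left_cancel this
    have hv : exp1 F (m+1) x - exp1 F (m+1) y ∈ annSub F N :=
      memAnn_of_proj_mul hπ hnil hz
    obtain ⟨W, hW⟩ := exp1_sub_factor (F := F) m x y
    rw [hW] at hv
    intro z
    have h0 : ((x - y) + (x - y) * W) * z = 0 := hv z
    rw [add_mul] at h0
    have e : (x - y) * W * z = W * ((x - y) * z) := by
      rw [mul_comm (x-y) W, mul_assoc]
    rw [e] at h0
    have hkey : (x - y) * z = -(W * ((x - y) * z)) := by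
      rwa [add_eq_zero_iff_eq_neg] at h0
    have hmem : ∀ n : ℕ, (x - y) * z ∈ pw F N n := by
      intro n
      induction n with
      | zero => trivial
      | succ n ih =>
          rw [hkey]
          exact neg_mem (mul_mem_pw n ih W)
    have := hmem (m+1+1)
    rw [hnil] at this
    exact (Submodule.mem_bot F).mp this
  · -- transitivity
    intro π ρ hπ hρ
    have main : ∀ k : ℕ, ∃ x : N, ∃ w ∈ pw F N (k+1),
        ρ = actProj F (m+1) x π + π ∘ₗ LinearMap.mul F N w := by
      intro k
      induction k with
      | zero =>
          obtain ⟨w, hw⟩ := exists_solve hAnn hπ hnil (ρ - π)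
            (fun z => by
              simp only [LinearMap.sub_apply]
              exact sub_mem (adm_mem hρ z) (adm_mem hπ z))
            (fun a ha => by
              simp only [LinearMap.sub_apply]
              rw [adm_fix hπ ha, adm_fix hρ ha, sub_self])
          refine ⟨0, w, trivial, ?_⟩
          ext z
          simp only [LinearMap.add_apply, LinearMap.coe_comp, Function.comp_apply,
            LinearMap.mul_apply', actProj_apply]
          rw [exp1_zero, zero_mul, map_zero, add_zero, hw]
          simp
      | succ k ih =>
          obtain ⟨x, w, hwmem, heq⟩ := ih
          have hr : exp1 F (m+1) (x+w) - exp1 F (m+1) x - w ∈ pw F N (k+2) :=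
            exp1_shift m x hwmem
          refine ⟨x + w, -(exp1 F (m+1) (x+w) - exp1 F (m+1) x - w), neg_mem hr, ?_⟩
          ext z
          have hz := congrArg (fun f : N →ₗ[F] N => f z) heq
          simp only [LinearMap.add_apply, LinearMap.coe_comp, Function.comp_apply,
            LinearMap.mul_apply', actProj_apply] at hz ⊢
          rw [hz]
          have e : exp1 F (m+1) (x+w) * z
              = exp1 F (m+1) x * z + w * z + (exp1 F (m+1) (x+w) - exp1 F (m+1) x - w) * z := by
            rw [← add_mul, ← add_mul]
            congr 1
            abel
          rw [e, neg_mul, map_neg, map_add, map_add]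
          abel
    obtain ⟨x, w, hwmem, heq⟩ := main (m+1)
    rw [hnil] at hwmem
    rw [(Submodule.mem_bot F).mp hwmem] at heq
    refine ⟨x, ?_⟩
    rw [heq, map_zero, LinearMap.comp_zero, add_zero]
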